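/- arXiv:2601.07299 — 2 statements merged into one kernel-verified Lean document; each statement's English description precedes it below -/
import Mathlib

section
/- Let M₀ ∈ ℝ, σ > 0 and λ > 0 with λ ≥ √(2/π)·σ. Then there exists x₀ < M₀ such that f_G(x; M₀, σ) < f_C(x; M₀, λ) for all x < x₀ and f_G(x; M₀, σ) > f_C(x; M₀, λ) for all x with x₀ < x < M₀. -/
/-- Gaussian PDF with location `μ` and scale `σ`. -/
noncomputable def gaussPDF (μ σ x : ℝ) : ℝ :=
  (1 / (σ * Real.sqrt (2 * Real.pi))) * Real.exp (-(x - μ) ^ 2 / (2 * σ ^ 2))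

/-- Cauchy PDF with location `m` and scale `lam`. -/
noncomputable def cauchyPDF (m lam x : ℝ) : ℝ :=
  1 / (lam * Real.pi * (1 + ((x - m) / lam) ^ 2))

noncomputable def phiCG (a L s u : ℝ) : ℝ := a + Real.log (1 + u / L) - u / (2 * s)

lemma phiCG_zero (a L s : ℝ) : phiCG a L s 0 = a := by
  simp [phiCG]

/-- strict concavity three-point inequality with left point 0 -/
lemma phiCG_concave (a L s : ℝ) (hL : 0 < L) {y z : ℝ} (hy : 0 < y) (hyz : y < z) :
    (1 - y / z) * phiCG a L s 0 + (y / z) * phiCG a L s z < phiCG a L s y := by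
  have hz : 0 < z := hy.trans hyz
  set t := y / z with ht_def
  have ht : 0 < t := by positivity
  have ht1 : t < 1 := (div_lt_one hz).2 hyz
  have htz : t * z = y := div_mul_cancel₀ y hz.ne'
  have hkey : (1 - t) * Real.log 1 + t * Real.log (1 + z / L) < Real.log (1 + y / L) := by
    have hne : (1:ℝ) ≠ 1 + z / L := by
      have : 0 < z / L := by positivity
      linarith
    have := strictConcaveOn_log_Ioi.2 (Set.mem_Ioi.2 (one_pos (α := ℝ)))
      (Set.mem_Ioi.2 (by positivity : (0:ℝ) < 1 + z / L))
      hne (show (0:ℝ) < 1 - t by linarith) ht (by ring)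
    have hxy : (1 - t) • (1:ℝ) + t • (1 + z / L) = 1 + y / L := by
      have h2 : t * (z / L) = y / L := by rw [mul_div_assoc', htz]
      simp only [smul_eq_mul]
      nlinarith [h2]
    rw [hxy] at this
    simpa using this
  have h3 : t * (z / (2 * s)) = y / (2 * s) := by rw [mul_div_assoc', htz]
  simp only [phiCG]
  rw [Real.log_one] at hkey
  norm_num
  nlinarith [hkey, h3]

set_option maxHeartbeats 1000000 in
/-- If `λ ≥ √(2/π)·σ`, there is a crossing point `x₀ < M₀` of the two PDFs:
the Cauchy PDF dominates strictly to its left and the Gaussian PDF dominates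
strictly between `x₀` and `M₀`. -/
theorem cauchy_gauss_pdf_single_crossing (M₀ σ lam : ℝ) (hσ : 0 < σ) (hlam : 0 < lam)
    (h : lam ≥ Real.sqrt (2 / Real.pi) * σ) :
    ∃ x₀ < M₀,
      (∀ x < x₀, gaussPDF M₀ σ x < cauchyPDF M₀ lam x) ∧
      (∀ x, x₀ < x → x < M₀ → cauchyPDF M₀ lam x < gaussPDF M₀ σ x) := by
  have hπ := Real.pi_pos
  have hπ1 : (1:ℝ) < Real.pi := by linarith [Real.pi_gt_three]
  set s := σ ^ 2 with hs_def
  set L := lam ^ 2 with hL_def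
  have hs : 0 < s := by positivity
  have hL : 0 < L := by positivity
  set w := Real.sqrt (2 * Real.pi) with hw_def
  have hw : 0 < w := Real.sqrt_pos.2 (by positivity)
  have hw2 : w ^ 2 = 2 * Real.pi := Real.sq_sqrt (by positivity)
  set a := Real.log (lam * Real.pi / (σ * w)) with ha_def
  -- √(2/π) * π = √(2π)
  have hsqrt_eq : Real.sqrt (2 / Real.pi) * Real.pi = w := by
    rw [hw_def, show 2 * Real.pi = 2 / Real.pi * Real.pi ^ 2 by field_simp,
      Real.sqrt_mul (by positivity), Real.sqrt_sq hπ.le]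
  have hbase : σ * w ≤ lam * Real.pi := by nlinarith [h, hsqrt_eq]
  have ha : 0 ≤ a := Real.log_nonneg ((one_le_div (by positivity)).2 hbase)
  -- ratio identity
  have hratio : ∀ x : ℝ, gaussPDF M₀ σ x
      = Real.exp (phiCG a L s ((x - M₀) ^ 2)) * cauchyPDF M₀ lam x := by
    intro x
    set u := (x - M₀) ^ 2 with hu_def
    have hu0 : 0 ≤ u := sq_nonneg _
    have h1L : 0 < 1 + u / L := by positivity
    have hexp : Real.exp (phiCG a L s u)
        = lam * Real.pi / (σ * w) * ((1 + u / L) * Real.exp (-u / (2 * s))) := by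
      rw [phiCG, sub_eq_add_neg, Real.exp_add, Real.exp_add,
        Real.exp_log (by positivity), Real.exp_log h1L, neg_div]
      ring
    simp only [gaussPDF, cauchyPDF, hexp, div_pow, ← hu_def, ← hL_def, ← hw_def, ← hs_def]
    have hne1 : σ * w ≠ 0 := by positivity
    have hne2 : lam * Real.pi * (1 + u / L) ≠ 0 := by positivity
    field_simp
  -- find c > 0 with phi c > 0
  obtain ⟨c, hc0, hφc⟩ : ∃ c, 0 < c ∧ 0 < phiCG a L s c := by
    rcases lt_or_ge L (2 * s) with hcase | hcase
    · refine ⟨2 * s - L, by linarith, ?_⟩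
      have h1 : 1 + (2 * s - L) / L = 2 * s / L := by field_simp; ring
      have h2 : (2 * s - L) / (2 * s) = 1 - L / (2 * s) := by field_simp
      have h3 : Real.log (L / (2 * s)) < L / (2 * s) - 1 :=
        Real.log_lt_sub_one_of_pos (by positivity)
          (by intro hh; rw [div_eq_one_iff_eq (by positivity)] at hh; linarith)
      have h4 : Real.log (2 * s / L) = -Real.log (L / (2 * s)) := by
        rw [show 2 * s / L = (L / (2 * s))⁻¹ by field_simp, Real.log_inv]
      rw [phiCG, h1, h2, h4]
      linarith
    · -- L ≥ 2s forces a > 0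
      have hgt : σ * w < lam * Real.pi := by
        have hσ2 : 0 < σ ^ 2 := by positivity
        have hcase' : 2 * σ ^ 2 ≤ lam ^ 2 := by rw [hs_def, hL_def] at hcase; linarith
        have k2 : 2 * σ ^ 2 * (Real.pi * Real.pi) ≤ lam ^ 2 * (Real.pi * Real.pi) :=
          mul_le_mul_of_nonneg_right hcase' (by positivity)
        have h2 : (σ * w) ^ 2 < (lam * Real.pi) ^ 2 := by
          have k1 : 2 * σ ^ 2 * Real.pi < 2 * σ ^ 2 * (Real.pi * Real.pi) := by
            nlinarith [mul_pos (sub_pos.2 hπ1) (show (0:ℝ) < 2 * σ ^ 2 * Real.pi by positivity)]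
          calc (σ * w) ^ 2 = σ ^ 2 * w ^ 2 := by ring
            _ = 2 * σ ^ 2 * Real.pi := by rw [hw2]; ring
            _ < lam ^ 2 * (Real.pi * Real.pi) := lt_of_lt_of_le k1 k2
            _ = (lam * Real.pi) ^ 2 := by ring
        exact lt_of_pow_lt_pow_left₀ 2 (by positivity) h2
      have ha' : 0 < a := Real.log_pos ((one_lt_div (by positivity)).2 hgt)
      refine ⟨s * a, by positivity, ?_⟩
      have h1 : 0 ≤ Real.log (1 + s * a / L) := Real.log_nonneg (by
        have : 0 ≤ s * a / L := by positivity
        linarith)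
      have h2 : s * a / (2 * s) = a / 2 := by field_simp
      rw [phiCG, h2]
      linarith
  -- find B > c with phi B < 0
  set C := a + Real.log 2 - Real.log L with hC_def
  obtain ⟨B, hBL, hBc, hB64, hBC2⟩ :
      ∃ B, L ≤ B ∧ c < B ∧ 64 * s ^ 2 ≤ B ∧ C ^ 2 < B := by
    refine ⟨|L| + |c| + 64 * s ^ 2 + C ^ 2 + 1, ?_, ?_, ?_, ?_⟩ <;>
      nlinarith [le_abs_self L, le_abs_self c, abs_nonneg L, abs_nonneg c,
        sq_nonneg s, sq_nonneg C, hs]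
  have hB0 : 0 < B := hL.trans_le hBL
  have hsqB := Real.sqrt_nonneg B
  have hsqB2 : Real.sqrt B ^ 2 = B := Real.sq_sqrt hB0.le
  have hsB8 : 8 * s ≤ Real.sqrt B := by nlinarith [hsqB2, hsqB, hs]
  have hCsB : C < 2 * Real.sqrt B := by nlinarith [hsqB2, hsqB, hBC2]
  have hφB : phiCG a L s B < 0 := by
    have hlog1 : Real.log (1 + B / L) ≤ Real.log (2 * B / L) := by
      apply Real.log_le_log (by positivity)
      have : 1 ≤ B / L := (one_le_div hL).2 hBL
      rw [mul_div_assoc]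
      linarith
    have hlog2 : Real.log (2 * B / L) = Real.log 2 + Real.log B - Real.log L := by
      rw [Real.log_div (by positivity) hL.ne', Real.log_mul two_ne_zero hB0.ne']
    have hlogB : Real.log B ≤ 2 * Real.sqrt B := by
      have h1 : Real.log (Real.sqrt B) ≤ Real.sqrt B - 1 :=
        Real.log_le_sub_one_of_pos (Real.sqrt_pos.2 hB0)
      have h2 : Real.log (Real.sqrt B) = Real.log B / 2 := Real.log_sqrt hB0.le
      linarith
    have hB2s : 4 * Real.sqrt B ≤ B / (2 * s) := by
      rw [le_div_iff₀ (by positivity)]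
      nlinarith [hsB8, hsqB2, hsqB]
    rw [phiCG]
    have : Real.log (1 + B / L) ≤ C + 2 * Real.sqrt B := by
      rw [hC_def]; linarith
    linarith
  -- IVT
  have hcont : ContinuousOn (phiCG a L s) (Set.Icc c B) := by
    apply ContinuousOn.sub
    · apply ContinuousOn.add continuousOn_const
      apply ContinuousOn.log
      · exact (continuous_const.add (continuous_id.div_const L)).continuousOn
      · intro x hx
        have : 0 < 1 + x / L := by
          have : 0 < x := hc0.trans_le hx.1
          positivity
        exact this.ne'
    · exact (continuous_id.div_const (2 * s)).continuousOn
  obtain ⟨u₀, hu₀mem, hφu₀⟩ := intermediate_value_Icc' hBc.le hcont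
    (Set.mem_Icc.2 ⟨hφB.le, hφc.le⟩ : (0:ℝ) ∈ Set.Icc (phiCG a L s B) (phiCG a L s c))
  have hu₀pos : 0 < u₀ := hc0.trans_le hu₀mem.1
  -- single-crossing facts
  have fact1 : ∀ u, 0 < u → u < u₀ → 0 < phiCG a L s u := by
    intro u hu huu
    have hcc := phiCG_concave a L s hL hu huu
    rw [phiCG_zero, hφu₀] at hcc
    have ht1 : u / u₀ < 1 := (div_lt_one hu₀pos).2 huu
    nlinarith [hcc, ha]
  have fact2 : ∀ u, u₀ < u → phiCG a L s u < 0 := by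
    intro u huu
    have hcc := phiCG_concave a L s hL hu₀pos huu
    rw [phiCG_zero, hφu₀] at hcc
    have hu : 0 < u := hu₀pos.trans huu
    have ht : 0 < u₀ / u := by positivity
    have ht1 : u₀ / u < 1 := (div_lt_one hu).2 huu
    nlinarith [hcc, ha, ht]
  -- conclusion
  have hsq := Real.sqrt_pos.2 hu₀pos
  have hsq2 : Real.sqrt u₀ ^ 2 = u₀ := Real.sq_sqrt hu₀pos.le
  refine ⟨M₀ - Real.sqrt u₀, by linarith, ?_, ?_⟩
  · intro x hx
    have hcpos : 0 < cauchyPDF M₀ lam x := by rw [cauchyPDF]; positivity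
    have hult : u₀ < (x - M₀) ^ 2 := by nlinarith [hsq2, hsq]
    rw [hratio x]
    calc Real.exp (phiCG a L s ((x - M₀) ^ 2)) * cauchyPDF M₀ lam x
        < 1 * cauchyPDF M₀ lam x := by
          exact mul_lt_mul_of_pos_right (Real.exp_lt_one_iff.2 (fact2 _ hult)) hcpos
      _ = cauchyPDF M₀ lam x := one_mul _
  · intro x hx1 hx2
    have hcpos : 0 < cauchyPDF M₀ lam x := by rw [cauchyPDF]; positivity
    have hu : 0 < (x - M₀) ^ 2 := by nlinarith
    have hult : (x - M₀) ^ 2 < u₀ := by nlinarith [hsq2, hsq]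
    rw [hratio x]
    exact (lt_mul_iff_one_lt_left hcpos).2 (Real.one_lt_exp_iff.2 (fact1 _ hu hult))
end

section
/- Let σ > 0 and λ > 0, and write F_C(x) = F_C(x; 0, λ), f_C(x) = f_C(x; 0, λ), F_G(x) = F_G(x; 0, σ), f_G(x) = f_G(x; 0, σ). Suppose there exists x₃ > 0 such that F_G(x₃) = F_C(x₃), F_G(x) < F_C(x) for all x ∈ (0, x₃), and F_G(x) > F_C(x) for all x > x₃. Then there exist x₁ ∈ (0, x₃) and x₂ ∈ (x₃, ∞) such that f_C(x₁) = f_G(x₂) and F_C(x₁) + f_C(x₁)·(x₂ − x₁) = F_G(x₂); that is, a common tangential line linking the Cauchy CDF at x₁ to the Gaussian CDF at x₂ exists. -/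
open Set MeasureTheory Filter Real

/-- Gaussian CDF with location `μ` and scale `σ`. -/
noncomputable def gaussCDF (μ σ x : ℝ) : ℝ :=
  ∫ t in Set.Iic x, gaussPDF μ σ t

/-- Cauchy CDF with location `m` and scale `lam`. -/
noncomputable def cauchyCDF (m lam x : ℝ) : ℝ :=
  1 / 2 + (1 / Real.pi) * Real.arctan ((x - m) / lam)

lemma gaussPDF_pos {σ : ℝ} (hσ : 0 < σ) (x : ℝ) : 0 < gaussPDF 0 σ x := by
  unfold gaussPDF
  have := Real.pi_pos
  positivity

lemma cauchyPDF_eq {lam : ℝ} (hlam : 0 < lam) (x : ℝ) :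
    cauchyPDF 0 lam x = lam / (Real.pi * (lam^2 + x^2)) := by
  unfold cauchyPDF
  have := Real.pi_pos
  rw [sub_zero]
  field_simp

lemma cauchyPDF_pos {lam : ℝ} (hlam : 0 < lam) (x : ℝ) : 0 < cauchyPDF 0 lam x := by
  rw [cauchyPDF_eq hlam]
  have := Real.pi_pos
  positivity

lemma continuous_gaussPDF (σ : ℝ) : Continuous (gaussPDF 0 σ) := by
  unfold gaussPDF; fun_prop

lemma integrable_gaussPDF {σ : ℝ} (hσ : 0 < σ) : Integrable (gaussPDF 0 σ) := by
  have h : Integrable (fun x : ℝ => Real.exp (-(1/(2*σ^2)) * x^2)) :=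
    integrable_exp_neg_mul_sq (by positivity)
  have h2 := h.const_mul (1 / (σ * Real.sqrt (2 * Real.pi)))
  refine h2.congr ?_
  filter_upwards with x
  unfold gaussPDF
  congr 1
  congr 1
  ring

lemma hasDerivAt_gaussCDF {σ : ℝ} (hσ : 0 < σ) (x : ℝ) :
    HasDerivAt (gaussCDF 0 σ) (gaussPDF 0 σ x) x := by
  have hint := integrable_gaussPDF hσ
  have heqf : gaussCDF 0 σ = fun y => gaussCDF 0 σ 0 + ∫ t in (0:ℝ)..y, gaussPDF 0 σ t := by
    funext y
    have := intervalIntegral.integral_Iic_sub_Iic (μ := volume) (f := gaussPDF 0 σ)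
      hint.integrableOn hint.integrableOn (a := 0) (b := y)
    unfold gaussCDF
    linarith [this]
  rw [heqf]
  exact (intervalIntegral.integral_hasDerivAt_right hint.intervalIntegrable
    ((continuous_gaussPDF σ).stronglyMeasurableAtFilter _ _)
    (continuous_gaussPDF σ).continuousAt).const_add _

lemma gaussCDF_zero {σ : ℝ} (hσ : 0 < σ) : gaussCDF 0 σ 0 = 1/2 := by
  have hint := integrable_gaussPDF hσ
  have hsqrt : (0:ℝ) < Real.sqrt (2*Real.pi) := Real.sqrt_pos.mpr (by positivity)
  have htot : ∫ x, gaussPDF 0 σ x = 1 := by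
    have heqf : gaussPDF 0 σ = fun x : ℝ =>
        (1 / (σ * Real.sqrt (2 * Real.pi))) * Real.exp (-(1/(2*σ^2)) * x^2) := by
      funext x; unfold gaussPDF; congr 2; ring
    rw [heqf, MeasureTheory.integral_const_mul, integral_gaussian]
    rw [show Real.pi / (1/(2*σ^2)) = σ^2 * (2*Real.pi) by field_simp]
    rw [Real.sqrt_mul (sq_nonneg σ), Real.sqrt_sq hσ.le]
    field_simp
  have hsym : ∫ x in Iic (0:ℝ), gaussPDF 0 σ x = ∫ x in Ioi (0:ℝ), gaussPDF 0 σ x := by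
    have h := integral_comp_neg_Iic (0:ℝ) (gaussPDF 0 σ)
    rw [neg_zero] at h
    rw [← h]
    congr 1
    funext x
    unfold gaussPDF
    congr 2
    ring
  have hsplit := intervalIntegral.integral_Iic_add_Ioi (μ := volume) (b := (0:ℝ))
    hint.integrableOn hint.integrableOn
  unfold gaussCDF
  rw [htot] at hsplit
  linarith [hsplit, hsym]

lemma hasDerivAt_cauchyCDF {lam : ℝ} (hlam : 0 < lam) (x : ℝ) :
    HasDerivAt (cauchyCDF 0 lam) (cauchyPDF 0 lam x) x := by
  have hpi := Real.pi_pos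
  have h1 : HasDerivAt (fun y : ℝ => (y - 0) / lam) (1/lam) x := by
    simpa using ((hasDerivAt_id x).sub_const 0).div_const lam
  have h2 := (Real.hasDerivAt_arctan ((x - 0)/lam)).comp x h1
  have h3 := h2.const_mul (1/Real.pi)
  have h4 := h3.const_add (1/2 : ℝ)
  have : (1/Real.pi) * (1 / (1 + ((x - 0)/lam)^2) * (1/lam)) = cauchyPDF 0 lam x := by
    unfold cauchyPDF
    have : (0:ℝ) < 1 + ((x - 0)/lam)^2 := by positivity
    field_simp
  rw [this] at h4
  exact h4

lemma hasDerivAt_gaussPDF {σ : ℝ} (hσ : 0 < σ) (x : ℝ) :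
    HasDerivAt (gaussPDF 0 σ) (-(x/σ^2) * gaussPDF 0 σ x) x := by
  have h1 : HasDerivAt (fun y : ℝ => -(y - 0)^2 / (2*σ^2)) (-(x/σ^2)) x := by
    have h0 : HasDerivAt (fun y : ℝ => (y - 0)) 1 x := (hasDerivAt_id x).sub_const 0
    have h2 := (h0.pow 2).neg.div_const (2*σ^2)
    refine h2.congr_deriv ?_
    field_simp
    ring
  have h3 := (h1.exp).const_mul (1 / (σ * Real.sqrt (2 * Real.pi)))
  have : (1 / (σ * Real.sqrt (2 * Real.pi))) * (Real.exp (-(x-0)^2/(2*σ^2)) * (-(x/σ^2)))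
      = -(x/σ^2) * gaussPDF 0 σ x := by unfold gaussPDF; ring
  rw [this] at h3
  exact h3

lemma hasDerivAt_gaussPDF' {σ : ℝ} (hσ : 0 < σ) (x : ℝ) :
    HasDerivAt (fun y => -(y/σ^2) * gaussPDF 0 σ y)
      ((-(1/σ^2) + x^2/σ^4) * gaussPDF 0 σ x) x := by
  have h1 : HasDerivAt (fun y : ℝ => -(y/σ^2)) (-(1/σ^2)) x := by
    exact ((hasDerivAt_id x).div_const (σ^2)).neg
  have h2 := h1.mul (hasDerivAt_gaussPDF hσ x)
  refine h2.congr_deriv ?_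
  field_simp

lemma hasDerivAt_cauchyPDF {lam : ℝ} (hlam : 0 < lam) (x : ℝ) :
    HasDerivAt (cauchyPDF 0 lam) (-(2*lam*x) / (Real.pi*(lam^2+x^2)^2)) x := by
  have hpi := Real.pi_pos
  have heqf : cauchyPDF 0 lam = fun y => lam / (Real.pi * (lam^2 + y^2)) :=
    funext (cauchyPDF_eq hlam)
  rw [heqf]
  have hd : HasDerivAt (fun y : ℝ => Real.pi * (lam^2 + y^2)) (Real.pi * (2*x)) x := by
    have : HasDerivAt (fun y : ℝ => lam^2 + y^2) (2*x) x := by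
      simpa using ((hasDerivAt_pow 2 x).const_add (lam^2))
    exact this.const_mul Real.pi
  have hden : Real.pi * (lam^2 + x^2) ≠ 0 := by positivity
  have h := (hasDerivAt_const x lam).div hd hden
  refine h.congr_deriv ?_
  have h2 : (0:ℝ) < lam^2 + x^2 := by positivity
  field_simp
  ring

lemma hasDerivAt_cauchyPDF' {lam : ℝ} (hlam : 0 < lam) (x : ℝ) :
    HasDerivAt (fun y => -(2*lam*y) / (Real.pi*(lam^2+y^2)^2))
      ((2*lam*(3*x^2-lam^2)) / (Real.pi*(lam^2+x^2)^3)) x := by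
  have hpi := Real.pi_pos
  have hnum : HasDerivAt (fun y : ℝ => -(2*lam*y)) (-(2*lam)) x := by
    exact (((hasDerivAt_id x).const_mul (2*lam)).neg).congr_deriv (by ring)
  have hin : HasDerivAt (fun y : ℝ => lam^2 + y^2) (2*x) x := by
    simpa using ((hasDerivAt_pow 2 x).const_add (lam^2))
  have hden : HasDerivAt (fun y : ℝ => Real.pi*(lam^2+y^2)^2)
      (Real.pi * (2*(lam^2+x^2)*(2*x))) x := by
    have := (hin.pow 2).const_mul Real.pi
    refine this.congr_deriv ?_
    ring
  have hne : Real.pi*(lam^2+x^2)^2 ≠ 0 := by positivity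
  have h := hnum.div hden hne
  refine h.congr_deriv ?_
  have h2 : (0:ℝ) < lam^2 + x^2 := by positivity
  field_simp
  ring

lemma deriv_nonneg_right {F : ℝ → ℝ} {d x₀ b : ℝ} (hF : HasDerivAt F d x₀)
    (h0 : F x₀ = 0) (hb : x₀ < b) (h : ∀ x ∈ Set.Ioo x₀ b, 0 ≤ F x) : 0 ≤ d := by
  have hs : Tendsto (slope F x₀) (nhdsWithin x₀ (Set.Ioi x₀)) (nhds d) :=
    (hasDerivAt_iff_tendsto_slope.mp hF).mono_left
      (nhdsWithin_mono _ fun y hy => Set.mem_compl_singleton_iff.mpr (ne_of_gt hy))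
  refine ge_of_tendsto hs ?_
  filter_upwards [Ioo_mem_nhdsGT_of_mem (Set.left_mem_Ico.mpr hb)] with y hy
  rw [slope_def_field, h0, sub_zero]
  exact div_nonneg (h y hy) (sub_nonneg.mpr hy.1.le)

lemma neg_on_right {F : ℝ → ℝ} {d x₀ : ℝ} (hF : HasDerivAt F d x₀)
    (h0 : F x₀ = 0) (hd : d < 0) : ∃ u, x₀ < u ∧ ∀ x ∈ Set.Ioo x₀ u, F x < 0 := by
  have hs : Tendsto (slope F x₀) (nhdsWithin x₀ (Set.Ioi x₀)) (nhds d) :=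
    (hasDerivAt_iff_tendsto_slope.mp hF).mono_left
      (nhdsWithin_mono _ fun y hy => Set.mem_compl_singleton_iff.mpr (ne_of_gt hy))
  have hmem : slope F x₀ ⁻¹' (Set.Iio 0) ∈ nhdsWithin x₀ (Set.Ioi x₀) :=
    hs (Iio_mem_nhds hd)
  rcases mem_nhdsGT_iff_exists_Ioo_subset.mp hmem with ⟨u, hu, hsub⟩
  refine ⟨u, hu, fun x hx => ?_⟩
  have hsl : slope F x₀ x < 0 := hsub hx
  rw [slope_def_field, h0, sub_zero] at hsl
  have hxp : 0 < x - x₀ := sub_pos.mpr hx.1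
  rcases div_neg_iff.mp hsl with ⟨_, h2⟩ | ⟨h1, _⟩
  · linarith
  · exact h1

lemma neg_on_left {F : ℝ → ℝ} {d x₀ : ℝ} (hF : HasDerivAt F d x₀)
    (h0 : F x₀ = 0) (hd : 0 < d) : ∃ u, u < x₀ ∧ ∀ x ∈ Set.Ioo u x₀, F x < 0 := by
  have hs : Tendsto (slope F x₀) (nhdsWithin x₀ (Set.Iio x₀)) (nhds d) :=
    (hasDerivAt_iff_tendsto_slope.mp hF).mono_left
      (nhdsWithin_mono _ fun y hy => Set.mem_compl_singleton_iff.mpr (ne_of_lt hy))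
  have hmem : slope F x₀ ⁻¹' (Set.Ioi 0) ∈ nhdsWithin x₀ (Set.Iio x₀) :=
    hs (Ioi_mem_nhds hd)
  rcases mem_nhdsLT_iff_exists_Ioo_subset.mp hmem with ⟨u, hu, hsub⟩
  refine ⟨u, hu, fun x hx => ?_⟩
  have hsl : 0 < slope F x₀ x := hsub hx
  rw [slope_def_field, h0, sub_zero] at hsl
  have hxp : x - x₀ < 0 := sub_neg.mpr hx.2
  rcases div_pos_iff.mp hsl with ⟨_, h2⟩ | ⟨h1, _⟩
  · linarith
  · exact h1

lemma mvt_all {F F' : ℝ → ℝ} (hd : ∀ x, HasDerivAt F (F' x) x) {u v : ℝ} (h : u < v) :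
    ∃ ξ ∈ Set.Ioo u v, F v - F u = F' ξ * (v - u) := by
  obtain ⟨ξ, hξ, hval⟩ := exists_hasDerivAt_eq_slope F F' h
    (fun x _ => (hd x).continuousAt.continuousWithinAt) (fun x _ => hd x)
  refine ⟨ξ, hξ, ?_⟩
  rw [hval]
  field_simp [ne_of_gt (sub_pos.mpr h)]

lemma gaussPDF_anti {σ : ℝ} (hσ : 0 < σ) {u v : ℝ} (hu : 0 ≤ u) (huv : u < v) :
    gaussPDF 0 σ v < gaussPDF 0 σ u := by
  unfold gaussPDF
  have hsqrt : (0:ℝ) < Real.sqrt (2*Real.pi) := Real.sqrt_pos.mpr (by positivity)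
  have h2 : u^2 < v^2 := by nlinarith
  have h3 : (0:ℝ) < 2*σ^2 := by positivity
  have hlt : -(v-0)^2/(2*σ^2) < -(u-0)^2/(2*σ^2) := by
    rw [div_lt_div_iff₀ h3 h3]; nlinarith
  exact mul_lt_mul_of_pos_left (Real.exp_lt_exp.mpr hlt) (by positivity)

lemma cauchyPDF_anti {lam : ℝ} (hlam : 0 < lam) {u v : ℝ} (hu : 0 ≤ u) (huv : u < v) :
    cauchyPDF 0 lam v < cauchyPDF 0 lam u := by
  rw [cauchyPDF_eq hlam, cauchyPDF_eq hlam]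
  have hpi := Real.pi_pos
  have h2 : u^2 < v^2 := by nlinarith
  apply div_lt_div_of_pos_left hlam (by positivity) (by nlinarith)

lemma x1_spec {lam : ℝ} (hlam : 0 < lam) {s : ℝ} (hs : 0 < s) (hsc : s * (lam * Real.pi) < 1) :
    0 < Real.sqrt (lam/(Real.pi*s) - lam^2) ∧
    cauchyPDF 0 lam (Real.sqrt (lam/(Real.pi*s) - lam^2)) = s := by
  have hpi := Real.pi_pos
  have harg : 0 < lam/(Real.pi*s) - lam^2 := by
    rw [sub_pos, lt_div_iff₀ (by positivity)]
    nlinarith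
  constructor
  · exact Real.sqrt_pos.mpr harg
  · rw [cauchyPDF_eq hlam, Real.sq_sqrt harg.le]
    rw [div_eq_iff (by positivity : Real.pi * (lam^2 + (lam/(Real.pi*s) - lam^2)) ≠ 0)]
    field_simp
    ring

lemma x2_spec {σ : ℝ} (hσ : 0 < σ) {s : ℝ} (hs : 0 < s)
    (hsc : s * (σ * Real.sqrt (2*Real.pi)) < 1) :
    0 < Real.sqrt (-(2*σ^2) * Real.log (s * (σ * Real.sqrt (2*Real.pi)))) ∧
    gaussPDF 0 σ (Real.sqrt (-(2*σ^2) * Real.log (s * (σ * Real.sqrt (2*Real.pi))))) = s := by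
  have hsqrt : (0:ℝ) < Real.sqrt (2*Real.pi) := Real.sqrt_pos.mpr (by positivity)
  have hprod : 0 < s * (σ * Real.sqrt (2*Real.pi)) := by positivity
  have hlog : Real.log (s * (σ * Real.sqrt (2*Real.pi))) < 0 :=
    Real.log_neg hprod hsc
  have harg : 0 < -(2*σ^2) * Real.log (s * (σ * Real.sqrt (2*Real.pi))) := by
    have h2 : (0:ℝ) < 2*σ^2 := by positivity
    nlinarith
  refine ⟨Real.sqrt_pos.mpr harg, ?_⟩
  unfold gaussPDF
  rw [sub_zero, Real.sq_sqrt harg.le]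
  rw [show -(-(2*σ^2) * Real.log (s * (σ * Real.sqrt (2*Real.pi)))) / (2*σ^2)
      = Real.log (s * (σ * Real.sqrt (2*Real.pi))) by field_simp]
  rw [Real.exp_log hprod]
  field_simp

lemma pdf_ne (σ lam : ℝ) (hσ : 0 < σ) (hlam : 0 < lam)
    (x₃ : ℝ) (hx₃ : 0 < x₃)
    (heq : gaussCDF 0 σ x₃ = cauchyCDF 0 lam x₃)
    (hbelow : ∀ x ∈ Set.Ioo 0 x₃, gaussCDF 0 σ x < cauchyCDF 0 lam x)
    (habove : ∀ x > x₃, cauchyCDF 0 lam x < gaussCDF 0 σ x) :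
    cauchyPDF 0 lam x₃ ≠ gaussPDF 0 σ x₃ := by
  intro hp
  have hpi := Real.pi_pos
  set d1 : ℝ → ℝ := fun x => gaussPDF 0 σ x - cauchyPDF 0 lam x with hd1def
  set d1' : ℝ → ℝ := fun x =>
    -(x/σ^2) * gaussPDF 0 σ x - (-(2*lam*x)) / (Real.pi*(lam^2+x^2)^2) with hd1'def
  have hd1 : ∀ x, HasDerivAt d1 (d1' x) x :=
    fun x => (hasDerivAt_gaussPDF hσ x).sub (hasDerivAt_cauchyPDF hlam x)
  have hD : ∀ x, HasDerivAt (fun y => gaussCDF 0 σ y - cauchyCDF 0 lam y) (d1 x) x :=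
    fun x => (hasDerivAt_gaussCDF hσ x).sub (hasDerivAt_cauchyCDF hlam x)
  have hd1x₃ : d1 x₃ = 0 := by simp [hd1def, hp]
  -- Step A : d1' x₃ = 0
  have hA : d1' x₃ = 0 := by
    rcases lt_trichotomy (d1' x₃) 0 with hAneg | hA0 | hApos
    · exfalso
      obtain ⟨u, hu, hdneg⟩ := neg_on_right (hd1 x₃) hd1x₃ hAneg
      set x := (x₃ + u)/2 with hxdef
      have hx1 : x₃ < x := by simp only [hxdef]; linarith
      have hx2 : x < u := by simp only [hxdef]; linarith
      obtain ⟨ξ, hξ, hmv⟩ := mvt_all hD hx1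
      have hdξ : d1 ξ < 0 := hdneg ξ ⟨hξ.1, lt_trans hξ.2 hx2⟩
      have habx := habove x hx1
      have hGC : gaussCDF 0 σ x₃ - cauchyCDF 0 lam x₃ = 0 := by rw [heq]; ring
      nlinarith [mul_neg_of_neg_of_pos hdξ (by linarith : (0:ℝ) < x - x₃)]
    · exact hA0
    · exfalso
      obtain ⟨u, hu, hdneg⟩ := neg_on_left (hd1 x₃) hd1x₃ hApos
      set x := (max u 0 + x₃)/2 with hxdef
      have hmax : max u 0 < x₃ := max_lt hu hx₃
      have hx0 : 0 < x := by
        have : (0:ℝ) ≤ max u 0 := le_max_right u 0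
        simp only [hxdef]; linarith
      have hxu : u < x := by
        have : u ≤ max u 0 := le_max_left u 0
        simp only [hxdef]; linarith
      have hx3 : x < x₃ := by simp only [hxdef]; linarith
      obtain ⟨ξ, hξ, hmv⟩ := mvt_all hD hx3
      have hdξ : d1 ξ < 0 := hdneg ξ ⟨lt_trans hxu hξ.1, hξ.2⟩
      have hbx := hbelow x ⟨hx0, hx3⟩
      have hGC : gaussCDF 0 σ x₃ - cauchyCDF 0 lam x₃ = 0 := by rw [heq]; ring
      nlinarith [mul_neg_of_neg_of_pos hdξ (by linarith : (0:ℝ) < x₃ - x)]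
  -- Step rel : lam^2 + x₃^2 = 2σ^2
  have hden : (0:ℝ) < lam^2 + x₃^2 := by positivity
  have hcval : cauchyPDF 0 lam x₃ = lam / (Real.pi * (lam^2 + x₃^2)) := cauchyPDF_eq hlam x₃
  have hrel : lam^2 + x₃^2 = 2*σ^2 := by
    have h := hA
    simp only [hd1'def] at h
    rw [← hp, hcval] at h
    have h2 : -(x₃/σ^2) * (lam / (Real.pi * (lam^2 + x₃^2)))
        + (2*lam*x₃) / (Real.pi*(lam^2+x₃^2)^2) = 0 := by rw [neg_div] at h; linarith
    field_simp at h2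
    have key : lam * x₃ * Real.pi * (lam^2+x₃^2) * (2*σ^2 - (lam^2+x₃^2)) = 0 := by
      linear_combination (Real.pi*(lam^2+x₃^2)) * h2
    have hnz : lam * x₃ * Real.pi * (lam^2+x₃^2) ≠ 0 := by positivity
    have := (mul_eq_zero.mp key).resolve_left hnz
    linarith
  -- Step B : second derivative difference is negative
  have hB : (-(1/σ^2) + x₃^2/σ^4) * gaussPDF 0 σ x₃
      - (2*lam*(3*x₃^2-lam^2)) / (Real.pi*(lam^2+x₃^2)^3) < 0 := by
    rw [← hp, hcval]
    have key : (-(1/σ^2) + x₃^2/σ^4) * (lam / (Real.pi * (lam^2 + x₃^2)))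
        - (2*lam*(3*x₃^2-lam^2)) / (Real.pi*(lam^2+x₃^2)^3)
        = -(lam * x₃^2) / (Real.pi * σ^4 * (lam^2+x₃^2)) := by
      have hl2 : lam^2 = 2*σ^2 - x₃^2 := by linarith
      rw [hrel, hl2]
      field_simp
      ring
    rw [key]
    have : (0:ℝ) < lam * x₃^2 := by positivity
    have hd2 : (0:ℝ) < Real.pi * σ^4 * (lam^2+x₃^2) := by positivity
    exact div_neg_of_neg_of_pos (by linarith) hd2
  -- conclude
  have hd1' : ∀ x, HasDerivAt d1'
      ((-(1/σ^2) + x^2/σ^4) * gaussPDF 0 σ x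
        - (2*lam*(3*x^2-lam^2)) / (Real.pi*(lam^2+x^2)^3)) x :=
    fun x => (hasDerivAt_gaussPDF' hσ x).sub (hasDerivAt_cauchyPDF' hlam x)
  obtain ⟨u, hu, hneg⟩ := neg_on_right (hd1' x₃) hA hB
  set x := (x₃ + u)/2 with hxdef
  have hx1 : x₃ < x := by simp only [hxdef]; linarith
  have hx2 : x < u := by simp only [hxdef]; linarith
  have hd1neg : ∀ y ∈ Set.Ioo x₃ x, d1 y < 0 := by
    intro y hy
    obtain ⟨ξ, hξ, hmv⟩ := mvt_all hd1 hy.1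
    have hdξ : d1' ξ < 0 := hneg ξ ⟨hξ.1, by linarith [hξ.2, hy.2]⟩
    nlinarith [mul_neg_of_neg_of_pos hdξ (by linarith [hξ.2, hy.1] : (0:ℝ) < y - x₃), hd1x₃]
  obtain ⟨ξ, hξ, hmv⟩ := mvt_all hD hx1
  have hdξ : d1 ξ < 0 := hd1neg ξ hξ
  have habx := habove x hx1
  have hGC : gaussCDF 0 σ x₃ - cauchyCDF 0 lam x₃ = 0 := by rw [heq]; ring
  nlinarith [mul_neg_of_neg_of_pos hdξ (by linarith : (0:ℝ) < x - x₃)]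

set_option maxHeartbeats 1000000 in
/-- If the zero-centered Gaussian CDF crosses the zero-centered Cauchy CDF exactly
once on `(0, ∞)` at `x₃` (below before, above after), then a common tangential line
exists, tangent to the Cauchy CDF at some `x₁ ∈ (0, x₃)` and to the Gaussian CDF at
some `x₂ ∈ (x₃, ∞)`. -/
theorem tangential_link_exists (σ lam : ℝ) (hσ : 0 < σ) (hlam : 0 < lam)
    (x₃ : ℝ) (hx₃ : 0 < x₃)
    (heq : gaussCDF 0 σ x₃ = cauchyCDF 0 lam x₃)
    (hbelow : ∀ x ∈ Set.Ioo 0 x₃, gaussCDF 0 σ x < cauchyCDF 0 lam x)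
    (habove : ∀ x > x₃, cauchyCDF 0 lam x < gaussCDF 0 σ x) :
    ∃ x₁ ∈ Set.Ioo 0 x₃, ∃ x₂ ∈ Set.Ioi x₃,
      cauchyPDF 0 lam x₁ = gaussPDF 0 σ x₂ ∧
      cauchyCDF 0 lam x₁ + cauchyPDF 0 lam x₁ * (x₂ - x₁) = gaussCDF 0 σ x₂ := by
  have hpi := Real.pi_pos
  have hsqrt : (0:ℝ) < Real.sqrt (2*Real.pi) := Real.sqrt_pos.mpr (by positivity)
  -- step: c x₃ < g x₃
  have h1 : cauchyPDF 0 lam x₃ ≤ gaussPDF 0 σ x₃ := by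
    have hF : HasDerivAt (fun x => gaussCDF 0 σ x - cauchyCDF 0 lam x)
        (gaussPDF 0 σ x₃ - cauchyPDF 0 lam x₃) x₃ :=
      (hasDerivAt_gaussCDF hσ x₃).sub (hasDerivAt_cauchyCDF hlam x₃)
    have h := deriv_nonneg_right hF (by rw [heq]; ring) (lt_add_one x₃)
      (fun x hx => le_of_lt (sub_pos.mpr (habove x hx.1)))
    linarith
  have hC0 : cauchyCDF 0 lam 0 = 1/2 := by
    unfold cauchyCDF; simp
  have hg0c0 : gaussPDF 0 σ 0 ≤ cauchyPDF 0 lam 0 := by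
    have hF : HasDerivAt (fun x => cauchyCDF 0 lam x - gaussCDF 0 σ x)
        (cauchyPDF 0 lam 0 - gaussPDF 0 σ 0) 0 :=
      (hasDerivAt_cauchyCDF hlam 0).sub (hasDerivAt_gaussCDF hσ 0)
    have h := deriv_nonneg_right hF (by rw [hC0, gaussCDF_zero hσ]; ring) hx₃
      (fun x hx => le_of_lt (sub_pos.mpr (hbelow x hx)))
    linarith
  have hlt : cauchyPDF 0 lam x₃ < gaussPDF 0 σ x₃ :=
    lt_of_le_of_ne h1 (pdf_ne σ lam hσ hlam x₃ hx₃ heq hbelow habove)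
  -- pdf values at 0
  have hc0 : cauchyPDF 0 lam 0 = 1/(lam*Real.pi) := by
    unfold cauchyPDF; norm_num
  have hg0 : gaussPDF 0 σ 0 = 1/(σ*Real.sqrt (2*Real.pi)) := by
    unfold gaussPDF; norm_num
  have hgx₃0 : gaussPDF 0 σ x₃ < gaussPDF 0 σ 0 := gaussPDF_anti hσ le_rfl hx₃
  have hcx₃pos := cauchyPDF_pos hlam x₃
  -- range conditions for s ∈ Icc (c x₃) (g x₃)
  have hrange : ∀ s, cauchyPDF 0 lam x₃ ≤ s → s ≤ gaussPDF 0 σ x₃ →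
      0 < s ∧ s * (lam * Real.pi) < 1 ∧ s * (σ * Real.sqrt (2*Real.pi)) < 1 := by
    intro s hs1 hs2
    have hs0 : 0 < s := lt_of_lt_of_le hcx₃pos hs1
    have hsg : s < gaussPDF 0 σ 0 := lt_of_le_of_lt hs2 hgx₃0
    have hsc : s < cauchyPDF 0 lam 0 := lt_of_lt_of_le hsg hg0c0
    refine ⟨hs0, ?_, ?_⟩
    · rw [hc0] at hsc
      rw [← lt_div_iff₀ (by positivity)]
      simpa using hsc
    · rw [hg0] at hsg
      rw [← lt_div_iff₀ (by positivity)]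
      simpa using hsg
  set x1f : ℝ → ℝ := fun s => Real.sqrt (lam/(Real.pi*s) - lam^2) with hx1fdef
  set x2f : ℝ → ℝ := fun s =>
    Real.sqrt (-(2*σ^2) * Real.log (s * (σ * Real.sqrt (2*Real.pi)))) with hx2fdef
  -- endpoint identities
  have hcval : cauchyPDF 0 lam x₃ = lam / (Real.pi * (lam^2 + x₃^2)) := cauchyPDF_eq hlam x₃
  have hx1x₃ : x1f (cauchyPDF 0 lam x₃) = x₃ := by
    simp only [hx1fdef]
    rw [hcval]
    rw [show lam / (Real.pi * (lam / (Real.pi * (lam^2 + x₃^2)))) - lam^2 = x₃^2 by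
      field_simp; ring]
    exact Real.sqrt_sq hx₃.le
  have hgx₃exp : gaussPDF 0 σ x₃ * (σ * Real.sqrt (2*Real.pi)) =
      Real.exp (-x₃^2/(2*σ^2)) := by
    unfold gaussPDF; rw [sub_zero]; field_simp
  have hx2x₃ : x2f (gaussPDF 0 σ x₃) = x₃ := by
    simp only [hx2fdef]
    rw [hgx₃exp, Real.log_exp]
    rw [show -(2*σ^2) * (-x₃^2/(2*σ^2)) = x₃^2 by field_simp]
    exact Real.sqrt_sq hx₃.le
  -- monotone relations
  have hx1lt : ∀ s, cauchyPDF 0 lam x₃ < s → s ≤ gaussPDF 0 σ x₃ → x1f s < x₃ := by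
    intro s hs1 hs2
    obtain ⟨hs0, hsl, hsg⟩ := hrange s hs1.le hs2
    simp only [hx1fdef]
    rw [Real.sqrt_lt' hx₃]
    rw [hcval] at hs1
    rw [div_lt_iff₀ (by positivity)] at hs1
    rw [sub_lt_iff_lt_add, div_lt_iff₀ (by positivity)]
    nlinarith
  have hx2gt : ∀ s, 0 < s → s < gaussPDF 0 σ x₃ → x₃ < x2f s := by
    intro s hs0 hs2
    have hsg : s < gaussPDF 0 σ 0 := lt_trans hs2 hgx₃0
    simp only [hx2fdef]
    rw [show x₃ = Real.sqrt (x₃^2) from (Real.sqrt_sq hx₃.le).symm]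
    apply Real.sqrt_lt_sqrt (sq_nonneg x₃)
    have hlog : Real.log (s * (σ * Real.sqrt (2*Real.pi))) < -x₃^2/(2*σ^2) := by
      rw [Real.log_lt_iff_lt_exp (by positivity)]
      rw [← hgx₃exp]
      exact mul_lt_mul_of_pos_right hs2 (by positivity)
    have h2σ : (0:ℝ) < 2*σ^2 := by positivity
    have h3 := (div_lt_iff₀ h2σ).mp
      (by linarith [neg_div (2*σ^2) (x₃^2)] :
        x₃^2/(2*σ^2) < -Real.log (s * (σ * Real.sqrt (2*Real.pi))))
    linarith [h3]
  -- Psi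
  set Psi : ℝ → ℝ := fun s =>
    (cauchyCDF 0 lam (x1f s) + s*(x₃ - x1f s))
      - (gaussCDF 0 σ (x2f s) + s*(x₃ - x2f s)) with hPsidef
  have hcontC : Continuous (cauchyCDF 0 lam) := by
    unfold cauchyCDF
    exact continuous_const.add (continuous_const.mul (Real.continuous_arctan.comp
      ((continuous_id.sub continuous_const).div_const lam)))
  have hcontG : Continuous (gaussCDF 0 σ) :=
    continuous_iff_continuousAt.mpr fun x => (hasDerivAt_gaussCDF hσ x).continuousAt
  have hIcc : ∀ s ∈ Set.Icc (cauchyPDF 0 lam x₃) (gaussPDF 0 σ x₃), s ≠ 0 :=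
    fun s hs => ne_of_gt (hrange s hs.1 hs.2).1
  have hcont1 : ContinuousOn x1f (Set.Icc (cauchyPDF 0 lam x₃) (gaussPDF 0 σ x₃)) := by
    apply Real.continuous_sqrt.comp_continuousOn
    exact (continuousOn_const.div (continuous_const.mul continuous_id).continuousOn
      (fun s hs => by
        have := (hrange s hs.1 hs.2).1
        exact mul_ne_zero hpi.ne' this.ne')).sub continuousOn_const
  have hcont2 : ContinuousOn x2f (Set.Icc (cauchyPDF 0 lam x₃) (gaussPDF 0 σ x₃)) := by
    apply Real.continuous_sqrt.comp_continuousOn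
    apply continuousOn_const.mul
    apply ContinuousOn.log
    · exact (continuous_id.mul continuous_const).continuousOn
    · intro s hs
      have := (hrange s hs.1 hs.2).1
      positivity
  have hPsiCont : ContinuousOn Psi (Set.Icc (cauchyPDF 0 lam x₃) (gaussPDF 0 σ x₃)) := by
    apply ContinuousOn.sub
    · exact (hcontC.comp_continuousOn hcont1).add
        (continuousOn_id.mul (continuousOn_const.sub hcont1))
    · exact (hcontG.comp_continuousOn hcont2).add
        (continuousOn_id.mul (continuousOn_const.sub hcont2))
  -- endpoint signs
  have hPlo : Psi (cauchyPDF 0 lam x₃) < 0 := by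
    obtain ⟨hs0, hsl, hsg⟩ := hrange _ le_rfl hlt.le
    have hb : x₃ < x2f (cauchyPDF 0 lam x₃) := hx2gt _ hs0 hlt
    have hgb : gaussPDF 0 σ (x2f (cauchyPDF 0 lam x₃)) = cauchyPDF 0 lam x₃ :=
      (x2_spec hσ hs0 hsg).2
    obtain ⟨η, hη, hmv⟩ := mvt_all (fun x => hasDerivAt_gaussCDF hσ x) hb
    have hηb : gaussPDF 0 σ (x2f (cauchyPDF 0 lam x₃)) < gaussPDF 0 σ η :=
      gaussPDF_anti hσ (by linarith [hη.1] : (0:ℝ) ≤ η) hη.2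
    have hprod := mul_lt_mul_of_pos_right (hgb ▸ hηb) (sub_pos.mpr hb)
    simp only [hPsidef]
    rw [hx1x₃]
    linarith [hmv, heq, hprod]
  have hPhi : 0 < Psi (gaussPDF 0 σ x₃) := by
    obtain ⟨hs0, hsl, hsg⟩ := hrange _ hlt.le le_rfl
    have ha : x1f (gaussPDF 0 σ x₃) < x₃ := hx1lt _ hlt le_rfl
    have ha0 : 0 < x1f (gaussPDF 0 σ x₃) := (x1_spec hlam hs0 hsl).1
    have hca : cauchyPDF 0 lam (x1f (gaussPDF 0 σ x₃)) = gaussPDF 0 σ x₃ :=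
      (x1_spec hlam hs0 hsl).2
    obtain ⟨ξ, hξ, hmv⟩ := mvt_all (fun x => hasDerivAt_cauchyCDF hlam x) ha
    have hξa : cauchyPDF 0 lam ξ < cauchyPDF 0 lam (x1f (gaussPDF 0 σ x₃)) :=
      cauchyPDF_anti hlam ha0.le hξ.1
    have hprod := mul_lt_mul_of_pos_right (hca ▸ hξa) (sub_pos.mpr ha)
    simp only [hPsidef]
    rw [hx2x₃]
    linarith [hmv, heq, hprod]
  -- IVT
  have hIVT := intermediate_value_Ioo hlt.le hPsiCont
  have h0mem : (0:ℝ) ∈ Set.Ioo (Psi (cauchyPDF 0 lam x₃)) (Psi (gaussPDF 0 σ x₃)) :=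
    ⟨hPlo, hPhi⟩
  obtain ⟨s, hsmem, hPs⟩ := hIVT h0mem
  obtain ⟨hs0, hsl, hsg⟩ := hrange s hsmem.1.le hsmem.2.le
  have ha0 : 0 < x1f s := (x1_spec hlam hs0 hsl).1
  have hca : cauchyPDF 0 lam (x1f s) = s := (x1_spec hlam hs0 hsl).2
  have ha3 : x1f s < x₃ := hx1lt s hsmem.1 hsmem.2.le
  have hb3 : x₃ < x2f s := hx2gt s hs0 hsmem.2
  have hgb : gaussPDF 0 σ (x2f s) = s := (x2_spec hσ hs0 hsg).2
  refine ⟨x1f s, ⟨ha0, ha3⟩, x2f s, hb3, ?_, ?_⟩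
  · rw [hca, hgb]
  · simp only [hPsidef] at hPs
    rw [hca]
    linarith [hPs]
end
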